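/- The function x ↦ log(a_1(x)), where a_1(x) = ⌊1/(θx)⌋, is integrable on (0,θ) with respect to γ_θ, and ∫_0^θ log(a_1(x)) dγ_θ(x) = (1/log(1+θ²)) · Σ_{k=m}^{∞} log k · log(1 + 1/(k(k+2))), the series on the right being convergent. -/

import Mathlib

open MeasureTheory Real Set

/-- θ = 1/√m. -/
noncomputable def theta (m : ℕ) : ℝ := 1 / Real.sqrt m

/-- The θ-expansion transformation T_θ(x) = 1/x − θ·⌊1/(xθ)⌋ for x ≠ 0, T_θ(0) = 0. -/
noncomputable def Tmap (m : ℕ) (x : ℝ) : ℝ :=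
  if x = 0 then 0 else 1 / x - theta m * (⌊1 / (x * theta m)⌋ : ℝ)

/-- The invariant measure γ_θ(A) = (1/log(1+θ²)) ∫_A θ/(1+θx) dx on [0,θ]. -/
noncomputable def gammaMeasure (m : ℕ) : Measure ℝ :=
  (ENNReal.ofReal (1 / Real.log (1 + theta m ^ 2))) •
    ((volume.restrict (Icc 0 (theta m))).withDensity
      fun x => ENNReal.ofReal (theta m / (1 + theta m * x)))

def piece (m i : ℕ) : Set ℝ :=
  Ioc (1 / (((i : ℝ) + m + 1) * theta m)) (1 / (((i : ℝ) + m) * theta m))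

section Aux
variable {m : ℕ} (hm : 2 ≤ m)
include hm

lemma m_pos : (0 : ℝ) < m := by
  have : (2:ℝ) ≤ m := by exact_mod_cast hm
  linarith

lemma theta_pos : 0 < theta m := by
  have := m_pos hm
  have : 0 < Real.sqrt m := Real.sqrt_pos.mpr this
  simpa [theta] using this

lemma theta_sq : theta m ^ 2 = 1 / m := by
  rw [theta, div_pow, one_pow, Real.sq_sqrt (m_pos hm).le]

lemma mul_theta : (m : ℝ) * theta m = Real.sqrt m := by
  rw [theta, mul_one_div, Real.div_sqrt]

lemma L_pos : 0 < Real.log (1 + theta m ^ 2) := by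
  have := theta_pos hm
  apply Real.log_pos
  nlinarith

lemma floor_on_piece (i : ℕ) {x : ℝ} (hx : x ∈ piece m i) :
    ⌊1 / (theta m * x)⌋ = ((i + m : ℕ) : ℤ) := by
  have ht := theta_pos hm
  obtain ⟨h1, h2⟩ := hx
  set K : ℝ := (i : ℝ) + m with hK
  have hK0 : 0 < K := by have := m_pos hm; positivity
  have hx0 : 0 < x := lt_trans (by positivity) h1
  have htx : 0 < theta m * x := by positivity
  rw [Int.floor_eq_iff]
  have h1' : 1 < x * ((K + 1) * theta m) := by
    rw [div_lt_iff₀ (by positivity)] at h1; linarith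
  have h2' : x * (K * theta m) ≤ 1 := by
    rw [le_div_iff₀ (by positivity)] at h2; linarith
  constructor
  · push_cast
    rw [le_div_iff₀ htx]
    calc K * (theta m * x) = x * (K * theta m) := by ring
      _ ≤ 1 := h2'
  · push_cast
    rw [div_lt_iff₀ htx]
    calc (1:ℝ) < x * ((K + 1) * theta m) := h1'
      _ = (K + 1) * (theta m * x) := by ring

lemma piece_subset (i : ℕ) : piece m i ⊆ Ioc 0 (theta m) := by
  have ht := theta_pos hm
  have hmp := m_pos hm
  intro x hx
  obtain ⟨h1, h2⟩ := hx
  refine ⟨lt_trans (by positivity) h1, le_trans h2 ?_⟩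
  rw [div_le_iff₀ (by positivity)]
  calc (1:ℝ) = theta m * ((m:ℝ) * theta m) := by
        rw [mul_theta hm, theta, one_div_mul_cancel (Real.sqrt_pos.mpr hmp).ne']
    _ ≤ theta m * (((i:ℝ) + m) * theta m) := by
        have hi : (m:ℝ) ≤ (i:ℝ) + m := by
          have : (0:ℝ) ≤ (i:ℝ) := by positivity
          linarith
        have := mul_le_mul_of_nonneg_right hi ht.le
        nlinarith

lemma piece_subset' (i : ℕ) : piece m i ⊆ Icc 0 (theta m) :=
  (piece_subset hm i).trans Ioc_subset_Icc_self

lemma union_pieces : ⋃ i, piece m i = Ioc 0 (theta m) := by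
  have ht := theta_pos hm
  have hmp := m_pos hm
  apply Set.Subset.antisymm
  · intro x hx
    obtain ⟨i, hi⟩ := Set.mem_iUnion.mp hx
    exact piece_subset hm i hi
  · intro x hx
    obtain ⟨hx0, hxθ⟩ := hx
    have htx : 0 < theta m * x := by positivity
    have hr : (m : ℝ) ≤ 1 / (theta m * x) := by
      rw [le_div_iff₀ htx]
      have h1 : theta m * x ≤ theta m * theta m := by nlinarith
      have h2 : (m:ℝ) * (theta m * theta m) = 1 := by
        have := mul_theta hm
        have h3 : Real.sqrt m * theta m = 1 := by
          rw [theta, mul_one_div, div_self (Real.sqrt_pos.mpr hmp).ne']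
        nlinarith
      nlinarith
    set k : ℤ := ⌊1 / (theta m * x)⌋ with hk
    have hkm : (m : ℤ) ≤ k := by
      rw [hk]; exact Int.le_floor.mpr (by exact_mod_cast hr)
    refine Set.mem_iUnion.mpr ⟨(k - m).toNat, ?_⟩
    have hcast : ((k - (m:ℤ)).toNat : ℝ) + m = (k : ℝ) := by
      have : ((k - (m:ℤ)).toNat : ℤ) = k - m := Int.toNat_of_nonneg (by omega)
      have : (((k - (m:ℤ)).toNat : ℤ) : ℝ) = ((k - m : ℤ) : ℝ) := by rw [this]
      push_cast at this ⊢
      linarith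
    have hk0 : (0:ℝ) < (k:ℝ) := by
      have : (0:ℤ) < k := by omega
      exact_mod_cast this
    have hfl := Int.floor_le (1 / (theta m * x))
    have hfl2 := Int.lt_floor_add_one (1 / (theta m * x))
    rw [← hk] at hfl hfl2
    constructor
    · rw [hcast, div_lt_iff₀ (by positivity)]
      rw [div_lt_iff₀ htx] at hfl2
      nlinarith
    · rw [hcast, le_div_iff₀ (by positivity)]
      rw [le_div_iff₀ htx] at hfl
      nlinarith

lemma pieces_disjoint : Pairwise (Function.onFun Disjoint (piece m)) := by
  have ht := theta_pos hm
  have hmp := m_pos hm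
  have key : ∀ i j : ℕ, i < j → Disjoint (piece m i) (piece m j) := by
    intro i j hij
    rw [piece, piece, Set.Ioc_disjoint_Ioc, min_le_iff]
    right
    rw [le_max_iff]
    left
    apply one_div_le_one_div_of_le (by positivity)
    have : (i:ℝ) + m + 1 ≤ (j:ℝ) + m := by
      have : (i:ℝ) + 1 ≤ j := by exact_mod_cast hij
      linarith
    nlinarith
  intro i j hij
  rcases lt_or_gt_of_ne hij with h | h
  · exact key i j h
  · exact (key j i h).symm

end Aux

section Aux2
variable {m : ℕ} (hm : 2 ≤ m)
include hm

lemma integral_density {a b : ℝ} (ha : 0 ≤ a) (hab : a ≤ b) :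
    ∫ x in a..b, theta m / (1 + theta m * x) =
      Real.log (1 + theta m * b) - Real.log (1 + theta m * a) := by
  have ht := theta_pos hm
  have hpos : ∀ x ∈ Set.uIcc a b, 0 < 1 + theta m * x := by
    intro x hx
    rw [Set.uIcc_of_le hab] at hx
    nlinarith [hx.1]
  rw [show (fun x => theta m / (1 + theta m * x)) = fun x => theta m / (1 + theta m * x) from rfl]
  exact intervalIntegral.integral_eq_sub_of_hasDerivAt
    (fun x hx => by
      have h0 : (1 + theta m * x) ≠ 0 := (hpos x hx).ne'
      simpa using (((hasDerivAt_id x).const_mul (theta m)).const_add 1).log h0)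
    (((continuousOn_const.div
        ((continuous_const.add (continuous_const.mul continuous_id)).continuousOn)
        (fun x hx => (hpos x hx).ne'))).intervalIntegrable)

lemma measure_piece (i : ℕ) :
    gammaMeasure m (piece m i) =
      ENNReal.ofReal ((1 / Real.log (1 + theta m ^ 2)) *
        Real.log (1 + 1 / (((i:ℝ) + m) * (((i:ℝ) + m) + 2)))) := by
  have ht := theta_pos hm
  have hmp := m_pos hm
  have hL := L_pos hm
  set K : ℝ := (i : ℝ) + m with hKdef
  have hK : 2 ≤ K := by
    have h2 : (2:ℝ) ≤ (m:ℝ) := by exact_mod_cast hm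
    have : (0:ℝ) ≤ (i:ℝ) := by positivity
    rw [hKdef]; linarith
  have hK0 : 0 < K := by linarith
  set a : ℝ := 1 / ((K + 1) * theta m) with hadef
  set b : ℝ := 1 / (K * theta m) with hbdef
  have ha0 : 0 < a := by rw [hadef]; positivity
  have hab : a ≤ b := by
    rw [hadef, hbdef]
    apply one_div_le_one_div_of_le (by positivity)
    nlinarith
  have hpiece : piece m i = Ioc a b := rfl
  rw [hpiece, gammaMeasure, Measure.smul_apply, smul_eq_mul,
    withDensity_apply _ measurableSet_Ioc, Measure.restrict_restrict measurableSet_Ioc,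
    Set.inter_eq_self_of_subset_left (hpiece ▸ piece_subset' hm i)]
  have hnn : 0 ≤ᵐ[volume.restrict (Ioc a b)]
      fun x => theta m / (1 + theta m * x) := by
    refine ae_restrict_of_forall_mem measurableSet_Ioc fun x hx => ?_
    have hx0 : 0 < x := lt_trans ha0 hx.1
    positivity
  have hint : Integrable (fun x => theta m / (1 + theta m * x))
      (volume.restrict (Ioc a b)) := by
    apply IntegrableOn.mono_set _ Ioc_subset_Icc_self
    apply ContinuousOn.integrableOn_Icc
    apply continuousOn_const.div
      ((continuous_const.add (continuous_const.mul continuous_id)).continuousOn)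
    intro x hx
    have hx0 : 0 < x := lt_of_lt_of_le ha0 hx.1
    simp only [Pi.add_apply, Pi.mul_apply, id_eq]
    nlinarith
  rw [← ofReal_integral_eq_lintegral_ofReal hint hnn,
    ← intervalIntegral.integral_of_le hab, integral_density hm ha0.le hab]
  rw [← ENNReal.ofReal_mul (by positivity)]
  congr 1
  have hb' : theta m * b = 1 / K := by
    rw [hbdef]; field_simp
  have ha' : theta m * a = 1 / (K + 1) := by
    rw [hadef]; field_simp
  rw [hb', ha']
  have e1 : 1 + 1 / K = (K + 1) / K := by field_simp
  have e2 : 1 + 1 / (K + 1) = (K + 2) / (K + 1) := by field_simp; ring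
  have e3 : 1 + 1 / (K * (K + 2)) = ((K + 1) * (K + 1)) / (K * (K + 2)) := by
    field_simp; ring
  rw [e1, e2, e3, Real.log_div (by positivity) (by positivity),
    Real.log_div (by positivity) (by positivity),
    Real.log_div (by positivity) (by positivity),
    Real.log_mul (by positivity) (by positivity),
    Real.log_mul (by positivity) (by positivity)]
  ring

end Aux2

section Aux3
variable {m : ℕ} (hm : 2 ≤ m)
include hm

lemma K_ge_two (k : ℕ) : (2:ℝ) ≤ ((k + m : ℕ) : ℝ) := by
  push_cast
  have h1 : (2:ℝ) ≤ (m:ℝ) := by exact_mod_cast hm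
  have h2 : (0:ℝ) ≤ (k:ℝ) := by positivity
  linarith

lemma term_nonneg (k : ℕ) :
    0 ≤ Real.log ((k + m : ℕ) : ℝ) *
      Real.log (1 + 1 / (((k + m : ℕ) : ℝ) * (((k + m : ℕ) : ℝ) + 2))) := by
  have hK := K_ge_two hm k
  set K : ℝ := ((k + m : ℕ) : ℝ)
  have hK0 : (0:ℝ) < K := by linarith
  apply mul_nonneg (Real.log_nonneg (by linarith))
  apply Real.log_nonneg
  have : 0 ≤ 1 / (K * (K + 2)) := by positivity
  linarith

lemma summable_series :
    Summable (fun k : ℕ => Real.log ((k + m : ℕ) : ℝ) *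
      Real.log (1 + 1 / (((k + m : ℕ) : ℝ) * (((k + m : ℕ) : ℝ) + 2)))) := by
  have h0 : Summable (fun n : ℕ => (n : ℝ) ^ (-(3/2) : ℝ)) :=
    Real.summable_nat_rpow.mpr (by norm_num)
  have h1 : Summable (fun k : ℕ => ((k + m : ℕ) : ℝ) ^ (-(3/2) : ℝ)) := by
    simpa [Function.comp_def] using h0.comp_injective (add_left_injective m)
  refine Summable.of_nonneg_of_le (term_nonneg hm) (fun k => ?_) (h1.mul_left 2)
  have hK := K_ge_two hm k
  set K : ℝ := ((k + m : ℕ) : ℝ) with hKdef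
  have hK0 : (0:ℝ) < K := by linarith
  set u : ℝ := 1 / (K * (K + 2)) with hudef
  have hu0 : 0 < u := by rw [hudef]; positivity
  have hlogK : Real.log K ≤ K ^ ((2:ℝ)⁻¹) / (2:ℝ)⁻¹ :=
    Real.log_le_rpow_div hK0.le (by norm_num)
  have hlogu : Real.log (1 + u) ≤ u := by
    have := Real.log_le_sub_one_of_pos (show (0:ℝ) < 1 + u by linarith)
    linarith
  have hrpos : (0:ℝ) ≤ K ^ ((2:ℝ)⁻¹) / (2:ℝ)⁻¹ := by positivity
  have step1 : Real.log K * Real.log (1 + u) ≤ (K ^ ((2:ℝ)⁻¹) / (2:ℝ)⁻¹) * u :=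
    mul_le_mul hlogK hlogu
      (Real.log_nonneg (by linarith)) hrpos
  refine step1.trans ?_
  have hu2 : u ≤ K ^ (-(2:ℝ)) := by
    rw [Real.rpow_neg hK0.le, hudef, one_div]
    apply inv_anti₀
    · have : K ^ (2:ℝ) = K ^ (2:ℕ) := by
        rw [← Real.rpow_natCast]; norm_num
      rw [this]; positivity
    · rw [show K ^ (2:ℝ) = K ^ (2:ℕ) by rw [← Real.rpow_natCast]; norm_num]
      nlinarith
  calc (K ^ ((2:ℝ)⁻¹) / (2:ℝ)⁻¹) * u = 2 * (K ^ ((2:ℝ)⁻¹) * u) := by ring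
    _ ≤ 2 * (K ^ ((2:ℝ)⁻¹) * K ^ (-(2:ℝ))) := by
        have := mul_le_mul_of_nonneg_left hu2 (show (0:ℝ) ≤ K ^ ((2:ℝ)⁻¹) by positivity)
        linarith
    _ = 2 * K ^ (-(3/2) : ℝ) := by
        rw [← Real.rpow_add hK0]
        norm_num

end Aux3

/-- x ↦ log a₁(x) with a₁(x) = ⌊1/(θx)⌋ is γ_θ-integrable on (0,θ) and
∫₀^θ log a₁ dγ_θ = (1/log(1+θ²)) Σ_{k≥m} log k · log(1 + 1/(k(k+2))),
the series being convergent. -/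
theorem log_digit_integrable (m : ℕ) (hm : 2 ≤ m) (hns : ¬ IsSquare m) :
    IntegrableOn (fun x => Real.log ((⌊1 / (theta m * x)⌋ : ℤ) : ℝ))
        (Ioo 0 (theta m)) (gammaMeasure m) ∧
      Summable (fun k : ℕ =>
        Real.log ((k + m : ℕ) : ℝ) *
          Real.log (1 + 1 / (((k + m : ℕ) : ℝ) * (((k + m : ℕ) : ℝ) + 2)))) ∧
      ∫ x in Ioo 0 (theta m),
          Real.log ((⌊1 / (theta m * x)⌋ : ℤ) : ℝ) ∂(gammaMeasure m) =
        (1 / Real.log (1 + theta m ^ 2)) *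
          ∑' k : ℕ,
            Real.log ((k + m : ℕ) : ℝ) *
              Real.log (1 + 1 / (((k + m : ℕ) : ℝ) * (((k + m : ℕ) : ℝ) + 2))) := by
  have ht := theta_pos hm
  have hL := L_pos hm
  set f : ℝ → ℝ := fun x => Real.log ((⌊1 / (theta m * x)⌋ : ℤ) : ℝ) with hf
  set c : ℝ := 1 / Real.log (1 + theta m ^ 2) with hc
  have hc0 : 0 ≤ c := by rw [hc]; positivity
  set S : ℕ → ℝ := fun k =>
    Real.log ((k + m : ℕ) : ℝ) *
      Real.log (1 + 1 / (((k + m : ℕ) : ℝ) * (((k + m : ℕ) : ℝ) + 2))) with hS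
  set v : ℕ → ℝ := fun i =>
    Real.log (1 + 1 / (((i : ℝ) + m) * (((i : ℝ) + m) + 2))) with hv
  have hcast : ∀ i : ℕ, ((i + m : ℕ) : ℝ) = (i : ℝ) + m := fun i => by push_cast; ring
  have hSv : ∀ i : ℕ, S i = Real.log ((i + m : ℕ) : ℝ) * v i := by
    intro i; rw [hS, hv]; simp only [hcast i]
  have hv0 : ∀ i, 0 ≤ v i := by
    intro i
    have hK : (2:ℝ) ≤ (i:ℝ) + m := by rw [← hcast i]; exact K_ge_two hm i
    apply Real.log_nonneg
    have : (0:ℝ) ≤ 1 / (((i:ℝ) + m) * (((i:ℝ) + m) + 2)) := by positivity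
    linarith
  have hμ : ∀ i, gammaMeasure m (piece m i) = ENNReal.ofReal (c * v i) :=
    fun i => measure_piece hm i
  have hμreal : ∀ i, (gammaMeasure m (piece m i)).toReal = c * v i := fun i => by
    rw [hμ i, ENNReal.toReal_ofReal (mul_nonneg hc0 (hv0 i))]
  have hfval : ∀ i : ℕ, ∀ x ∈ piece m i, f x = Real.log ((i + m : ℕ) : ℝ) := by
    intro i x hx
    rw [hf]
    simp only
    rw [floor_on_piece hm i hx, Int.cast_natCast]
  have hlognn : ∀ i : ℕ, 0 ≤ Real.log ((i + m : ℕ) : ℝ) := by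
    intro i
    apply Real.log_nonneg
    have := K_ge_two hm i
    linarith
  have hi : ∀ i, IntegrableOn f (piece m i) (gammaMeasure m) := by
    intro i
    have hconst : IntegrableOn (fun _ => Real.log ((i + m : ℕ) : ℝ))
        (piece m i) (gammaMeasure m) := by
      apply (integrableOn_const_iff).mpr
      right
      rw [hμ i]
      exact ENNReal.ofReal_lt_top
    exact hconst.congr_fun (fun x hx => (hfval i x hx).symm) measurableSet_Ioc
  have hint : ∀ i, ∫ x in piece m i, f x ∂(gammaMeasure m) =
      Real.log ((i + m : ℕ) : ℝ) * (c * v i) := by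
    intro i
    have e := setIntegral_congr_fun (μ := gammaMeasure m) (s := piece m i)
      (f := f) (g := fun _ => Real.log ((i + m : ℕ) : ℝ)) measurableSet_Ioc (hfval i)
    rw [e, setIntegral_const, measureReal_def, hμreal i, smul_eq_mul, mul_comm]
  have hnorm : ∀ i, ∫ x in piece m i, ‖f x‖ ∂(gammaMeasure m) =
      Real.log ((i + m : ℕ) : ℝ) * (c * v i) := by
    intro i
    have e := setIntegral_congr_fun (μ := gammaMeasure m) (s := piece m i)
      (f := fun x => ‖f x‖) (g := fun _ => Real.log ((i + m : ℕ) : ℝ)) measurableSet_Ioc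
      (fun x hx => by
        simp only
        rw [hfval i x hx, Real.norm_eq_abs, abs_of_nonneg (hlognn i)])
    rw [e, setIntegral_const, measureReal_def, hμreal i, smul_eq_mul, mul_comm]
  have hsum : Summable S := summable_series hm
  have hsumnorm : Summable (fun i => ∫ x in piece m i, ‖f x‖ ∂(gammaMeasure m)) := by
    apply Summable.congr (hsum.mul_left c)
    intro i
    rw [hnorm i, hSv i]
    ring
  have hIoc : IntegrableOn f (Ioc 0 (theta m)) (gammaMeasure m) := by
    rw [← union_pieces hm]
    exact integrableOn_iUnion_of_summable_integral_norm
      hi hsumnorm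
  have hnull : gammaMeasure m {theta m} = 0 := by
    rw [gammaMeasure, Measure.smul_apply,
      withDensity_apply _ (measurableSet_singleton _),
      Measure.restrict_restrict (measurableSet_singleton _)]
    have h0 : volume ({theta m} ∩ Icc 0 (theta m)) = 0 :=
      measure_mono_null inter_subset_left (measure_singleton _)
    rw [Measure.restrict_eq_zero.mpr h0, lintegral_zero_measure, smul_eq_mul, mul_zero]
  have hEq : Ioo 0 (theta m) =ᵐ[gammaMeasure m] Ioc 0 (theta m) := by
    rw [MeasureTheory.ae_eq_set]
    constructor
    · rw [Set.diff_eq_empty.mpr Ioo_subset_Ioc_self, measure_empty]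
    · apply measure_mono_null _ hnull
      intro x hx
      obtain ⟨⟨h1, h2⟩, h3⟩ := hx
      simp only [mem_Ioo, not_and, not_lt] at h3
      exact le_antisymm h2 (h3 h1)
  have hrestrict : (gammaMeasure m).restrict (Ioo 0 (theta m)) =
      (gammaMeasure m).restrict (Ioc 0 (theta m)) :=
    Measure.restrict_congr_set hEq
  refine ⟨?_, hsum, ?_⟩
  · rw [IntegrableOn, hrestrict]
    exact hIoc
  · have h1 : ∫ x in Ioo 0 (theta m), f x ∂(gammaMeasure m) =
        ∫ x in Ioc 0 (theta m), f x ∂(gammaMeasure m) := by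
      rw [hrestrict]
    have h2 := integral_iUnion (μ := gammaMeasure m) (s := piece m) (f := f)
      (fun i => measurableSet_Ioc) (pieces_disjoint hm)
      (by rwa [union_pieces hm])
    rw [h1, ← union_pieces hm, h2]
    rw [show ∑' i, ∫ x in piece m i, f x ∂(gammaMeasure m) = ∑' i, c * S i from
      tsum_congr fun i => by rw [hint i, hSv i]; ring]
    exact tsum_mul_left
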